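/- Define the Shift-And invariant: for a pattern P of length m and text T, and bit vectors v_i ∈ {0,1}^m updated by v_{i+1}[j] = (v_i[j-1] ∨ [j = 1]) ∧ [P[j] = T[i+1]] for 1 ≤ j ≤ m (with v_i[0] interpreted as the constant-true initial state and v_0 the all-zero vector). Then for all i ≥ 0 and 1 ≤ j ≤ min(i, m): v_i[j] = 1 if and only if P[1..j] = T[i-j+1..i]. -/

import Mathlib

/-- The Shift-And invariant: state `j` of the automaton is active after reading
    `T[1..i]` iff `P[1..j] = T[i-j+1..i]`. Strings are 1-indexed. -/
theorem shift_and_invariant {α : Type*} [DecidableEq α] (P T : ℕ → α) (m : ℕ)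
    (v : ℕ → ℕ → Bool)
    (h0 : ∀ i, v i 0 = true)
    (hinit : ∀ j, 1 ≤ j → j ≤ m → v 0 j = false)
    (hrec : ∀ i j, 1 ≤ j → j ≤ m →
      v (i + 1) j = ((v i (j - 1) || decide (j = 1)) && decide (P j = T (i + 1)))) :
    ∀ i j, 1 ≤ j → j ≤ i → j ≤ m →
      (v i j = true ↔ ∀ k, 1 ≤ k → k ≤ j → P k = T (i - j + k)) := by
  intro i
  induction i with
  | zero => intro j hj1 hji hjm; omega
  | succ i ih =>
    intro j hj1 hji hjm
    rw [hrec i j hj1 hjm]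
    by_cases hj : j = 1
    · subst hj
      simp [h0]
      constructor
      · intro h k hk1 hk2
        interval_cases k
        simpa using h
      · intro h
        simpa using h 1 le_rfl le_rfl
    · have hj2 : 2 ≤ j := by omega
      have IH := ih (j - 1) (by omega) (by omega) (by omega)
      simp only [hj, decide_eq_true_eq, Bool.or_false, Bool.and_eq_true, IH,
        decide_false, Bool.false_or]
      constructor
      · rintro ⟨h1, h2⟩ k hk1 hk2
        rcases eq_or_lt_of_le hk2 with rfl | hk
        · have : i + 1 - k + k = i + 1 := by omega
          rw [this]; exact h2
        · have := h1 k hk1 (by omega)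
          have he : i - (j - 1) + k = i + 1 - j + k := by omega
          rwa [he] at this
      · intro h
        constructor
        · intro k hk1 hk2
          have := h k hk1 (by omega)
          have he : i + 1 - j + k = i - (j - 1) + k := by omega
          rwa [he] at this
        · have := h j hj1 le_rfl
          have he : i + 1 - j + j = i + 1 := by omega
          rwa [he] at this
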